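/- For m ≥ 3, the lifted code S_{(q,m)}(q|q³) is a three-weight code with weight enumerator 1 + (q²+q+1)(q^m−1) z^{q^{m−1}} + (q²+q+1)(q^m−1)(q^m−q) z^{q^{m−1}+q^{m−2}} + (q^m−1)(q^m−q)(q^m−q²) z^{q^{m−1}+q^{m−2}+q^{m−3}}. -/

import Mathlib

open Finset

/-- Hamming weight of a vector. -/
noncomputable def wt {ι R : Type*} [Fintype ι] [Zero R] (c : ι → R) : ℕ :=
  Set.ncard {j | c j ≠ 0}

/-- The lifted code `C(q|q^ℓ)`: the `E`-span of (the image in `E^n` of) a code `C ⊆ F^n`. -/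
noncomputable def liftCode (F : Type*) {ι : Type*} (E : Type*) [Field F] [Field E] [Algebra F E]
    (C : Submodule F (ι → F)) : Submodule E (ι → E) :=
  Submodule.span E ((fun c : ι → F => fun j => algebraMap F E (c j)) '' (C : Set (ι → F)))

/-- `A_i(C)`: the number of codewords of Hamming weight `i`. -/
noncomputable def numWt {ι R : Type*} [Fintype ι] [Semiring R] (C : Submodule R (ι → R)) (i : ℕ) : ℕ :=
  Set.ncard {c : ι → R | c ∈ C ∧ wt c = i}

/-- The set of supports of weight-`i` codewords of `C` (without repetition). -/
def codeSupports {ι R : Type*} [Fintype ι] [Semiring R] (C : Submodule R (ι → R)) (i : ℕ) :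
    Set (Set ι) :=
  {s | ∃ c, c ∈ C ∧ wt c = i ∧ s = {j | c j ≠ 0}}

/-- `C` has minimum Hamming distance `d`. -/
def IsMinDist {ι R : Type*} [Fintype ι] [Semiring R] (C : Submodule R (ι → R)) (d : ℕ) : Prop :=
  (∃ c, c ∈ C ∧ c ≠ 0 ∧ wt c = d) ∧ ∀ c, c ∈ C → c ≠ 0 → d ≤ wt c

/-- The dual code under the standard bilinear form. -/
def dualCode {ι R : Type*} [Fintype ι] [CommRing R] (C : Submodule R (ι → R)) :
    Submodule R (ι → R) where
  carrier := {x | ∀ c ∈ C, ∑ j, x j * c j = 0}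
  add_mem' := by
    intro a b ha hb c hc
    simp only [Set.mem_setOf_eq] at *
    simp [Pi.add_apply, add_mul, Finset.sum_add_distrib, ha c hc, hb c hc]
  zero_mem' := by intro c hc; simp
  smul_mem' := by
    intro a x hx c hc
    simp only [Set.mem_setOf_eq] at *
    simp [Pi.smul_apply, smul_eq_mul, mul_assoc, ← Finset.mul_sum, hx c hc]

/-- Evaluation of multivariate polynomials over `GF(2)` as a linear map. -/
noncomputable def evalLM (m : ℕ) :
    MvPolynomial (Fin m) (ZMod 2) →ₗ[ZMod 2] ((Fin m → ZMod 2) → ZMod 2) where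
  toFun := fun p x => MvPolynomial.eval x p
  map_add' := by intro p q; funext x; simp
  map_smul' := by intro a p; funext x; simp

/-- The binary Reed-Muller code `RM₂(r,m)`: evaluations of polynomials of total degree `≤ r`. -/
noncomputable def RM (r m : ℕ) : Submodule (ZMod 2) ((Fin m → ZMod 2) → ZMod 2) :=
  Submodule.map (evalLM m) (MvPolynomial.restrictTotalDegree (Fin m) (ZMod 2) r)

open Submodule Module

set_option linter.unusedSectionVars false

section AuxSimplex

variable {F : Type*} [Field F] [Fintype F] {m n : ℕ}

lemma aux_point_count (hm : 0 < m)
    (g : Fin n → (Fin m → F)) (hg0 : ∀ i, g i ≠ 0)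
    (hg : ∀ v : Fin m → F, v ≠ 0 → ∃! i : Fin n, ∃ a : F, v = a • g i)
    (K : Submodule F (Fin m → F)) :
    (Fintype.card F - 1) * {j | g j ∈ K}.ncard
      = Fintype.card F ^ (finrank F K) - 1 := by
  classical
  have hv0 : (Pi.single ⟨0, hm⟩ (1:F) : Fin m → F) ≠ 0 := by
    intro h0
    have := congrFun h0 ⟨0, hm⟩
    simp at this
  have hnn : Nonempty (Fin n) := ⟨((hg _ hv0).exists).choose⟩
  set f : (Fin m → F) → Fin n := fun v =>
    if h : v ≠ 0 then ((hg v h).exists).choose else Classical.arbitrary _ with hfdef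
  have hf1 : ∀ v (h : v ≠ 0), ∃ a : F, v = a • g (f v) := by
    intro v h
    simp only [hfdef, dif_pos h]
    exact ((hg v h).exists).choose_spec
  have hf2 : ∀ v (h : v ≠ 0) (i : Fin n), (∃ a : F, v = a • g i) → i = f v := by
    intro v h i hi
    have h1 := hf1 v h
    simp only [hfdef, dif_pos h] at *
    exact (hg v h).unique hi h1
  -- the finsets
  set A : Finset (Fin m → F) := (Finset.univ.filter (fun v => v ∈ K)).erase 0 with hA
  set B : Finset (Fin n) := Finset.univ.filter (fun j => g j ∈ K) with hB
  have hmapsto : ∀ v ∈ A, f v ∈ B := by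
    intro v hv
    rw [hA, Finset.mem_erase, Finset.mem_filter] at hv
    obtain ⟨hv0', -, hvK⟩ := hv
    obtain ⟨a, hva⟩ := hf1 v hv0'
    have ha : a ≠ 0 := by rintro rfl; simp at hva; exact hv0' hva
    rw [hB, Finset.mem_filter]
    refine ⟨Finset.mem_univ _, ?_⟩
    have h2 : a⁻¹ • v = g (f v) := by
      conv_lhs => rw [hva]
      rw [smul_smul, inv_mul_cancel₀ ha, one_smul]
    rw [← h2]; exact K.smul_mem _ hvK
  have hsum := Finset.card_eq_sum_card_fiberwise hmapsto
  have hfib : ∀ i ∈ B, (A.filter (fun v => f v = i)).card = Fintype.card F - 1 := by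
    intro i hi
    rw [hB, Finset.mem_filter] at hi
    have himg : A.filter (fun v => f v = i)
        = (Finset.univ.erase (0:F)).image (fun a => a • g i) := by
      ext v
      simp only [Finset.mem_filter, hA, Finset.mem_erase, Finset.mem_filter, Finset.mem_image,
        Finset.mem_univ, true_and, and_true]
      constructor
      · rintro ⟨⟨hv0', hvK⟩, hfv⟩
        obtain ⟨a, hva⟩ := hf1 v hv0'
        refine ⟨a, ?_, by rw [hva, hfv]⟩
        rintro rfl; rw [zero_smul] at hva; exact hv0' hva
      · rintro ⟨a, ha, rfl⟩
        have hv0' : a • g i ≠ 0 := by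
          simp only [ne_eq, smul_eq_zero, not_or]; exact ⟨ha, hg0 i⟩
        refine ⟨⟨hv0', K.smul_mem _ hi.2⟩, (hf2 _ hv0' i ⟨a, rfl⟩).symm⟩
    rw [himg, Finset.card_image_of_injOn, Finset.card_erase_of_mem (Finset.mem_univ _),
      Finset.card_univ]
    intro a _ b _ hab
    have hab : a • g i = b • g i := hab
    by_contra hne
    have : (a - b) • g i = 0 := by rw [sub_smul, hab, sub_self]
    rcases smul_eq_zero.1 this with h | h
    · exact hne (sub_eq_zero.1 h)
    · exact hg0 i h
  have hAcard : A.card = Fintype.card F ^ (finrank F K) - 1 := by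
    rw [hA, Finset.card_erase_of_mem (by simp [K.zero_mem]), ← Fintype.card_subtype]
    congr 1
    exact (card_eq_pow_finrank (K := F) (V := K))
  have hB' : {j | g j ∈ K}.ncard = B.card := by
    rw [Set.ncard_eq_toFinset_card', Set.toFinset_setOf]
  rw [hB', ← hAcard, hsum, Finset.sum_congr rfl hfib, Finset.sum_const, smul_eq_mul, mul_comm]





lemma aux_count0 :
    {y : Fin 3 → (Fin m → F) | finrank F (span F (Set.range y)) = 0}.ncard = 1 := by
  classical
  have : {y : Fin 3 → (Fin m → F) | finrank F (span F (Set.range y)) = 0} = {0} := by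
    ext y
    simp only [Set.mem_setOf_eq, Set.mem_singleton_iff]
    rw [Submodule.finrank_eq_zero, Submodule.span_eq_bot]
    constructor
    · intro h; funext k; exact h (y k) (Set.mem_range_self k)
    · rintro rfl x hx
      obtain ⟨k, rfl⟩ := hx
      rfl
  rw [this, Set.ncard_singleton]

lemma aux_count3 (hm : 3 ≤ m) :
    {y : Fin 3 → (Fin m → F) | finrank F (span F (Set.range y)) = 3}.ncard
      = (Fintype.card F ^ m - 1) * (Fintype.card F ^ m - Fintype.card F)
        * (Fintype.card F ^ m - Fintype.card F ^ 2) := by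
  classical
  have hset : {y : Fin 3 → (Fin m → F) | finrank F (span F (Set.range y)) = 3}
      = {y | LinearIndependent F y} := by
    ext y
    simp only [Set.mem_setOf_eq]
    rw [linearIndependent_iff_card_eq_finrank_span, Fintype.card_fin]
    rw [Set.finrank]
    exact ⟨fun h => h.symm, fun h => h.symm⟩
  rw [hset]
  have h1 : {y : Fin 3 → (Fin m → F) | LinearIndependent F y}.ncard
      = Nat.card {y : Fin 3 → (Fin m → F) // LinearIndependent F y} := by
    rw [← Nat.card_coe_set_eq]
    rfl
  rw [h1, card_linearIndependent (by
    rw [Module.finrank_fintype_fun_eq_card, Fintype.card_fin]; exact hm)]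
  rw [Module.finrank_fintype_fun_eq_card, Fintype.card_fin, Fin.prod_univ_three]
  simp [pow_zero, pow_one]





lemma aux_count1 :
    (Fintype.card F - 1) * {y : Fin 3 → (Fin m → F) | finrank F (span F (Set.range y)) = 1}.ncard
      = (Fintype.card F ^ m - 1) * (Fintype.card F ^ 3 - 1) := by
  classical
  set q := Fintype.card F with hq
  set Y1 : Finset (Fin 3 → (Fin m → F)) :=
    Finset.univ.filter (fun y => finrank F (span F (Set.range y)) = 1) with hY1
  set D : Finset ((Fin m → F) × (Fin 3 → F)) :=
    (Finset.univ.filter (fun v => v ≠ 0)) ×ˢ (Finset.univ.filter (fun a => a ≠ 0)) with hD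
  set θ : (Fin m → F) × (Fin 3 → F) → (Fin 3 → (Fin m → F)) :=
    fun p => fun k => p.2 k • p.1 with hθ
  have hspan : ∀ v : Fin m → F, v ≠ 0 → ∀ a : Fin 3 → F, a ≠ 0 →
      span F (Set.range (fun k => a k • v)) = span F {v} := by
    intro v hv a ha
    apply le_antisymm
    · rw [Submodule.span_le]
      rintro x ⟨k, rfl⟩
      exact Submodule.smul_mem _ _ (Submodule.mem_span_singleton_self v)
    · rw [Submodule.span_le, Set.singleton_subset_iff]
      obtain ⟨k0, hk0⟩ : ∃ k, a k ≠ 0 := by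
        by_contra hcon; push_neg at hcon; exact ha (funext hcon)
      have h := Submodule.smul_mem (span F (Set.range (fun k => a k • v))) (a k0)⁻¹
        (Submodule.subset_span (Set.mem_range_self k0))
      rwa [smul_smul, inv_mul_cancel₀ hk0, one_smul] at h
  have hmapsto : ∀ p ∈ D, θ p ∈ Y1 := by
    rintro ⟨v, a⟩ hp
    rw [hD, Finset.mem_product, Finset.mem_filter, Finset.mem_filter] at hp
    obtain ⟨⟨-, hv⟩, -, ha⟩ := hp
    rw [hY1, Finset.mem_filter]
    refine ⟨Finset.mem_univ _, ?_⟩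
    show finrank F (span F (Set.range (fun k => a k • v))) = 1
    rw [hspan v hv a ha]
    exact finrank_span_singleton hv
  have hsum := Finset.card_eq_sum_card_fiberwise hmapsto
  have hfib : ∀ y ∈ Y1, (D.filter (fun p => θ p = y)).card = q - 1 := by
    intro y hy
    rw [hY1, Finset.mem_filter] at hy
    have hy1 : finrank F (span F (Set.range y)) = 1 := hy.2
    have hbot : span F (Set.range y) ≠ ⊥ := by
      intro hc; rw [hc] at hy1; simp [finrank_bot] at hy1
    obtain ⟨v₀, hv₀mem, hv₀⟩ := Submodule.exists_mem_ne_zero_of_ne_bot hbot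
    have hspan₀ : span F {v₀} = span F (Set.range y) := by
      apply Submodule.eq_of_le_of_finrank_eq
      · rw [Submodule.span_le, Set.singleton_subset_iff]; exact hv₀mem
      · rw [finrank_span_singleton hv₀, hy1]
    have hmem : ∀ k, ∃ c : F, c • v₀ = y k := by
      intro k
      have : y k ∈ span F {v₀} := by
        rw [hspan₀]; exact Submodule.subset_span (Set.mem_range_self k)
      exact Submodule.mem_span_singleton.1 this
    choose a ha using hmem
    have hane : a ≠ 0 := by
      intro hc
      apply hbot
      rw [Submodule.span_eq_bot]
      rintro x ⟨k, rfl⟩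
      rw [← ha k, hc]; simp
    obtain ⟨k0, hk0⟩ : ∃ k, a k ≠ 0 := by
      by_contra hcon; push_neg at hcon; exact hane (funext hcon)
    have himg : D.filter (fun p => θ p = y)
        = (Finset.univ.erase (0:F)).image (fun t => (t • v₀, t⁻¹ • a)) := by
      ext ⟨v, b⟩
      simp only [Finset.mem_filter, hD, Finset.mem_product, Finset.mem_filter, Finset.mem_univ,
        true_and, Finset.mem_image, Finset.mem_erase]
      constructor
      · rintro ⟨⟨hv, hb⟩, hθp⟩
        have hθp' : ∀ k, b k • v = y k := fun k => congrFun hθp k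
        have hyk0 : y k0 ≠ 0 := by
          rw [← ha k0]
          simp only [ne_eq, smul_eq_zero, not_or]; exact ⟨hk0, hv₀⟩
        have hbk0 : b k0 ≠ 0 := by
          intro hc
          rw [← hθp' k0, hc, zero_smul] at hyk0
          exact hyk0 rfl
        set t : F := (b k0)⁻¹ * a k0 with ht
        have htne : t ≠ 0 := mul_ne_zero (inv_ne_zero hbk0) hk0
        have hveq : v = t • v₀ := by
          have h3 : b k0 • v = a k0 • v₀ := by rw [hθp' k0, ← ha k0]
          rw [ht, mul_smul, ← h3, smul_smul, inv_mul_cancel₀ hbk0, one_smul]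
        refine ⟨t, ⟨htne, trivial⟩, ?_⟩
        have hbeq : b = t⁻¹ • a := by
          funext k
          have h1 : b k • v = a k • v₀ := by rw [hθp' k, ← ha k]
          rw [hveq, smul_smul] at h1
          have h2 : (b k * t - a k) • v₀ = 0 := by rw [sub_smul, h1, sub_self]
          rcases smul_eq_zero.1 h2 with h | h
          · have h4 : b k * t = a k := by rwa [sub_eq_zero] at h
            rw [Pi.smul_apply, smul_eq_mul, ← h4, mul_comm (b k) t, ← mul_assoc,
              inv_mul_cancel₀ htne, one_mul]
          · exact absurd h hv₀
        rw [Prod.ext_iff]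
        exact ⟨hveq.symm, hbeq.symm⟩
      · rintro ⟨t, ⟨htne, -⟩, heq⟩
        rw [Prod.ext_iff] at heq
        obtain ⟨h1, h2⟩ := heq
        dsimp at h1 h2
        refine ⟨⟨?_, ?_⟩, ?_⟩
        · rw [← h1]
          simp only [ne_eq, smul_eq_zero, not_or]; exact ⟨htne, hv₀⟩
        · rw [← h2]
          intro hc
          have := congrFun hc k0
          simp only [Pi.smul_apply, smul_eq_mul, Pi.zero_apply] at this
          rcases mul_eq_zero.1 this with h | h
          · exact inv_ne_zero htne h
          · exact hk0 h
        · funext k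
          show b k • v = y k
          rw [← h1, ← h2]
          rw [Pi.smul_apply, smul_eq_mul, smul_smul, mul_comm t⁻¹ (a k), mul_assoc,
            inv_mul_cancel₀ htne, mul_one, ha k]
    rw [himg, Finset.card_image_of_injOn, Finset.card_erase_of_mem (Finset.mem_univ _),
      Finset.card_univ]
    intro s _ t _ hst
    have hst1 : s • v₀ = t • v₀ := congrArg Prod.fst hst
    by_contra hne
    have : (s - t) • v₀ = 0 := by rw [sub_smul, hst1, sub_self]
    rcases smul_eq_zero.1 this with h | h
    · exact hne (sub_eq_zero.1 h)
    · exact hv₀ h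
  -- assemble
  have hDcard : D.card = (q ^ m - 1) * (q ^ 3 - 1) := by
    rw [hD, Finset.card_product]
    congr 1
    · rw [Finset.filter_ne', Finset.card_erase_of_mem (Finset.mem_univ _), Finset.card_univ,
        Fintype.card_fun, Fintype.card_fin]
    · rw [Finset.filter_ne', Finset.card_erase_of_mem (Finset.mem_univ _), Finset.card_univ,
        Fintype.card_fun, Fintype.card_fin]
  have hncard : {y : Fin 3 → (Fin m → F) | finrank F (span F (Set.range y)) = 1}.ncard
      = Y1.card := by
    rw [Set.ncard_eq_toFinset_card', Set.toFinset_setOf]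
  rw [hncard, ← hDcard, hsum, Finset.sum_congr rfl hfib, Finset.sum_const, smul_eq_mul, mul_comm]





lemma aux_rank_le (y : Fin 3 → (Fin m → F)) : finrank F (span F (Set.range y)) ≤ 3 := by
  classical
  refine (finrank_span_le_card _).trans ?_
  rw [Set.toFinset_range]
  exact (Finset.card_image_le).trans (by simp)

lemma aux_total :
    {y : Fin 3 → (Fin m → F) | finrank F (span F (Set.range y)) = 0}.ncard
    + {y : Fin 3 → (Fin m → F) | finrank F (span F (Set.range y)) = 1}.ncard
    + {y : Fin 3 → (Fin m → F) | finrank F (span F (Set.range y)) = 2}.ncard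
    + {y : Fin 3 → (Fin m → F) | finrank F (span F (Set.range y)) = 3}.ncard
    = (Fintype.card F ^ m) ^ 3 := by
  classical
  have hmapsto : ∀ y : Fin 3 → (Fin m → F), y ∈ (Finset.univ : Finset (Fin 3 → (Fin m → F))) →
      finrank F (span F (Set.range y)) ∈ Finset.range 4 := by
    intro y _
    rw [Finset.mem_range]
    exact Nat.lt_succ_of_le (aux_rank_le y)
  have hsum := Finset.card_eq_sum_card_fiberwise hmapsto
  have hcardify : ∀ r : ℕ, {y : Fin 3 → (Fin m → F) | finrank F (span F (Set.range y)) = r}.ncard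
      = (Finset.univ.filter (fun y : Fin 3 → (Fin m → F) =>
          finrank F (span F (Set.range y)) = r)).card := by
    intro r
    rw [Set.ncard_eq_toFinset_card', Set.toFinset_setOf]
  rw [hcardify, hcardify, hcardify, hcardify]
  rw [Finset.card_univ, Fintype.card_fun, Fintype.card_fun, Fintype.card_fin, Fintype.card_fin]
    at hsum
  rw [hsum]
  rw [show (4:ℕ) = 3 + 1 from rfl, Finset.sum_range_succ, Finset.sum_range_succ,
    Finset.sum_range_succ, Finset.sum_range_one]

end AuxSimplex

/-- for `m ≥ 3` the lifted Simplex code over `GF(q³)` is a three-weight code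
with weight enumerator `1 + (q²+q+1)(q^m-1) z^{q^{m-1}}
+ (q²+q+1)(q^m-1)(q^m-q) z^{q^{m-1}+q^{m-2}}
+ (q^m-1)(q^m-q)(q^m-q²) z^{q^{m-1}+q^{m-2}+q^{m-3}}`. -/
theorem stmt13 {F E : Type*} [Field F] [Field E] [Algebra F E] [Fintype F] [Fintype E]
    {m n  : ℕ} (hm : 3 ≤ m) 
    (hE : Fintype.card E = Fintype.card F ^ 3)
    (g : Fin n → (Fin m → F)) (hg0 : ∀ i, g i ≠ 0)
    (hg : ∀ v : Fin m → F, v ≠ 0 → ∃! i : Fin n, ∃ a : F, v = a • g i)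
    (S : Submodule E (Fin n → E))
    (hS : S = Submodule.span E
      (Set.range fun i : Fin m => fun j : Fin n => algebraMap F E (g j i))) :
    numWt S 0 = 1 ∧
    numWt S (Fintype.card F ^ (m - 1))
      = (Fintype.card F ^ 2 + Fintype.card F + 1) * (Fintype.card F ^ m - 1) ∧
    numWt S (Fintype.card F ^ (m - 1) + Fintype.card F ^ (m - 2))
      = (Fintype.card F ^ 2 + Fintype.card F + 1) * (Fintype.card F ^ m - 1) *
        (Fintype.card F ^ m - Fintype.card F) ∧
    numWt S (Fintype.card F ^ (m - 1) + Fintype.card F ^ (m - 2) + Fintype.card F ^ (m - 3))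
      = (Fintype.card F ^ m - 1) * (Fintype.card F ^ m - Fintype.card F) *
        (Fintype.card F ^ m - Fintype.card F ^ 2) ∧
    ∀ i, i ≠ 0 → i ≠ Fintype.card F ^ (m - 1) →
      i ≠ Fintype.card F ^ (m - 1) + Fintype.card F ^ (m - 2) →
      i ≠ Fintype.card F ^ (m - 1) + Fintype.card F ^ (m - 2) + Fintype.card F ^ (m - 3) →
      numWt S i = 0 := by
  classical
  subst hS
  set q := Fintype.card F with hq
  have hq2 : 2 ≤ q := Fintype.one_lt_card
  have hm0 : 0 < m := by omega
  have hfinE : Module.Finite F E := ⟨⟨Finset.univ, by rw [Finset.coe_univ, Submodule.span_univ]⟩⟩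
  have hr3 : finrank F E = 3 := by
    have h := card_eq_pow_finrank (K := F) (V := E)
    rw [hE] at h
    exact (Nat.pow_right_injective hq2 h.symm)
  set b : Basis (Fin 3) F E := Module.finBasisOfFinrankEq F E hr3 with hb
  set rows : Fin m → (Fin n → E) := fun i => fun j => algebraMap F E (g j i) with hrows
  set φ : (Fin m → E) → (Fin n → E) := fun x => ∑ i, x i • rows i with hφ
  set c : (Fin m → E) → Fin 3 → (Fin m → F) := fun x k i => b.repr (x i) k with hc
  set rk : (Fin m → E) → ℕ := fun x => finrank F (span F (Set.range (c x))) with hrk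
  have hSmem : ∀ w : Fin n → E, (w ∈ Submodule.span E (Set.range fun i : Fin m =>
      fun j : Fin n => algebraMap F E (g j i)) ↔ ∃ x, φ x = w) := by
    intro w
    rw [mem_span_range_iff_exists_fun]
  have hcoord : ∀ x j, φ x j = ∑ k : Fin 3, (∑ i, c x k i * g j i) • b k := by
    intro x j
    have hφj : φ x j = ∑ i, x i * algebraMap F E (g j i) := by
      rw [hφ]
      simp [Finset.sum_apply, Pi.smul_apply, smul_eq_mul, hrows]
    rw [hφj]
    have step1 : ∀ i, x i * algebraMap F E (g j i) = ∑ k : Fin 3, (c x k i * g j i) • b k := by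
      intro i
      conv_lhs => rw [← b.sum_repr (x i)]
      rw [Finset.sum_mul]
      refine Finset.sum_congr rfl fun k _ => ?_
      rw [smul_mul_assoc, mul_comm, ← Algebra.smul_def, smul_smul]
    rw [Finset.sum_congr rfl (fun i _ => step1 i), Finset.sum_comm]
    refine Finset.sum_congr rfl fun k _ => ?_
    rw [Finset.sum_smul]
  have hzero : ∀ x j, (φ x j = 0 ↔ ∀ k, (∑ i, c x k i * g j i) = 0) := by
    intro x j
    rw [hcoord]
    constructor
    · intro h k
      exact Fintype.linearIndependent_iff.mp b.linearIndependent _ h k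
    · intro h
      rw [Finset.sum_congr rfl (fun k _ => by rw [h k, zero_smul]), Finset.sum_const, smul_zero]
  have hker : ∀ x, φ x = 0 → x = 0 := by
    intro x hx0
    have hdot : ∀ k j, ∑ i, c x k i * g j i = 0 := by
      intro k j
      exact (hzero x j).1 (by rw [hx0]; rfl) k
    have hc0 : ∀ k, c x k = 0 := by
      intro k
      funext i0
      have hv : (Pi.single i0 (1:F) : Fin m → F) ≠ 0 := by
        intro hcon
        have := congrFun hcon i0
        simp at this
      obtain ⟨i1, ⟨a, hva⟩, -⟩ := hg _ hv
      have h1 : ∑ i, c x k i * (Pi.single i0 (1:F) : Fin m → F) i = c x k i0 := by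
        simp [Pi.single_apply, mul_ite]
      have h2 : ∑ i, c x k i * (Pi.single i0 (1:F) : Fin m → F) i = 0 := by
        rw [hva]
        simp only [Pi.smul_apply, smul_eq_mul]
        have : ∀ i, c x k i * (a * g i1 i) = a * (c x k i * g i1 i) := fun i => by ring
        rw [Finset.sum_congr rfl (fun i _ => this i), ← Finset.mul_sum, hdot k i1, mul_zero]
      rw [h1] at h2
      simpa using h2
    funext i
    have hrep : b.repr (x i) = 0 := by
      ext k
      exact congrFun (hc0 k) i
    have := (LinearEquiv.map_eq_zero_iff b.repr).1 hrep
    simpa using this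
  have hinj : Function.Injective φ := by
    intro x y hxy
    have hsub : φ (x - y) = φ x - φ y := by
      rw [hφ]
      simp only [Pi.sub_apply, sub_smul, Finset.sum_sub_distrib]
    have : φ (x - y) = 0 := by rw [hsub, hxy, sub_self]
    have := hker _ this
    exact sub_eq_zero.1 this
  have hrkle : ∀ x, rk x ≤ 3 := fun x => aux_rank_le (c x)
  have hwt : ∀ x, (q - 1) * wt (φ x) = q ^ m - q ^ (m - rk x) := by
    intro x
    set M : Matrix (Fin 3) (Fin m) F := Matrix.of (c x) with hM
    set K : Submodule F (Fin m → F) := LinearMap.ker M.mulVecLin with hKdef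
    have hKiff : ∀ v, v ∈ K ↔ ∀ k, ∑ i, c x k i * v i = 0 := by
      intro v
      rw [hKdef, LinearMap.mem_ker]
      constructor
      · intro h k
        have := congrFun h k
        simpa [Matrix.mulVecLin_apply, Matrix.mulVec, dotProduct, hM] using this
      · intro h
        funext k
        simpa [Matrix.mulVecLin_apply, Matrix.mulVec, dotProduct, hM] using h k
    have hsupp : {j | φ x j ≠ 0} = {j | ¬ g j ∈ K} := by
      ext j
      simp only [Set.mem_setOf_eq, ne_eq, hzero x j, hKiff]
    have hwt1 : wt (φ x) = n - {j | g j ∈ K}.ncard := by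
      rw [wt, hsupp, Set.ncard_eq_toFinset_card', Set.toFinset_setOf,
        Set.ncard_eq_toFinset_card', Set.toFinset_setOf, Finset.filter_not,
        Finset.card_sdiff_of_subset (Finset.filter_subset _ _), Finset.card_univ, Fintype.card_fin]
    have hle : {j | g j ∈ K}.ncard ≤ n := by
      rw [Set.ncard_eq_toFinset_card', Set.toFinset_setOf]
      calc (Finset.univ.filter (fun j => g j ∈ K)).card ≤ Finset.univ.card :=
        Finset.card_filter_le _ _
      _ = n := by rw [Finset.card_univ, Fintype.card_fin]
    have hptK := aux_point_count hm0 g hg0 hg K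
    have hptT := aux_point_count hm0 g hg0 hg (⊤ : Submodule F (Fin m → F))
    rw [← hq] at hptK hptT
    have hTset : {j : Fin n | g j ∈ (⊤ : Submodule F (Fin m → F))} = Set.univ := by
      ext j; simp
    rw [hTset, Set.ncard_univ, Nat.card_eq_fintype_card, Fintype.card_fin,
      finrank_top, Module.finrank_fintype_fun_eq_card, Fintype.card_fin] at hptT
    have hrange : finrank F (LinearMap.range M.mulVecLin) = rk x := by
      have h1 : M.rank = finrank F (LinearMap.range M.mulVecLin) := rfl
      have h2 : (M.transpose).rank = M.rank := Matrix.rank_transpose M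
      have h3 : (M.transpose).rank = finrank F (span F (Set.range (M.transpose.transpose))) :=
        Matrix.rank_eq_finrank_span_cols _
      rw [Matrix.transpose_transpose] at h3
      have h4 : Set.range (M : Matrix (Fin 3) (Fin m) F) = Set.range (c x) := rfl
      rw [h4] at h3
      rw [← h1, ← h2, h3, hrk]
    have hrn := LinearMap.finrank_range_add_finrank_ker (M.mulVecLin)
    rw [Module.finrank_fintype_fun_eq_card, Fintype.card_fin, hrange, ← hKdef] at hrn
    have hKdim : finrank F K = m - rk x := by omega
    rw [hKdim] at hptK
    have hple : q ^ (m - rk x) ≤ q ^ m := Nat.pow_le_pow_right (by omega) (by omega)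
    have h1le : 1 ≤ q ^ (m - rk x) := Nat.one_le_pow _ _ (by omega)
    have h1le' : 1 ≤ q ^ m := Nat.one_le_pow _ _ (by omega)
    rw [hwt1, Nat.mul_sub]
    omega
  -- weight value function
  set W : ℕ → ℕ := fun r => ∑ t ∈ Finset.range r, q ^ (m - 1 - t) with hW
  have hW0 : W 0 = 0 := by simp [hW]
  have hW1 : W 1 = q ^ (m-1) := by simp [hW]
  have hW2 : W 2 = q ^ (m-1) + q ^ (m-2) := by
    simp only [hW]
    rw [Finset.sum_range_succ, Finset.sum_range_one,
      show m-1-0 = m-1 by omega, show m-1-1 = m-2 by omega]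
  have hW3 : W 3 = q ^ (m-1) + q ^ (m-2) + q ^ (m-3) := by
    simp only [hW]
    rw [Finset.sum_range_succ, Finset.sum_range_succ, Finset.sum_range_one,
      show m-1-0 = m-1 by omega, show m-1-1 = m-2 by omega, show m-1-2 = m-3 by omega]
  have key : ∀ k : ℕ, k + 1 ≤ m → (q - 1) * q ^ (m - (k+1)) = q ^ (m - k) - q ^ (m - (k+1)) := by
    intro k hk
    have hmk : m - k = (m - (k+1)) + 1 := by omega
    rw [hmk, pow_succ, Nat.sub_mul, one_mul, mul_comm]
  have hWval : ∀ x, wt (φ x) = W (rk x) := by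
    intro x
    have h := hwt x
    have hr := hrkle x
    have hWr : (q - 1) * W (rk x) = q ^ m - q ^ (m - rk x) := by
      have k1 := key 0 (by omega)
      have k2 := key 1 (by omega)
      have k3 := key 2 (by omega)
      norm_num at k1 k2 k3
      have p1 : q ^ (m-2) ≤ q ^ (m-1) := Nat.pow_le_pow_right (by omega) (by omega)
      have p2 : q ^ (m-3) ≤ q ^ (m-2) := Nat.pow_le_pow_right (by omega) (by omega)
      have p3 : q ^ (m-1) ≤ q ^ m := Nat.pow_le_pow_right (by omega) (by omega)
      have p0 : 1 ≤ q ^ (m-3) := Nat.one_le_pow _ _ (by omega)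
      rcases (by omega : rk x = 0 ∨ rk x = 1 ∨ rk x = 2 ∨ rk x = 3) with h0 | h0 | h0 | h0 <;>
        rw [h0]
      · rw [hW0, Nat.sub_zero, Nat.sub_self, mul_zero]
      · rw [hW1]
        omega
      · rw [hW2, Nat.mul_add, k1, k2]
        omega
      · rw [hW3, Nat.mul_add, Nat.mul_add, k1, k2, k3]
        omega
    exact Nat.eq_of_mul_eq_mul_left (by omega : 0 < q - 1) (by rw [h, ← hWr])
  have hWinj : ∀ r s, r ≤ 3 → s ≤ 3 → W r = W s → r = s := by
    have p1 : 0 < q ^ (m-1) := Nat.pow_pos (by omega)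
    have p2 : 0 < q ^ (m-2) := Nat.pow_pos (by omega)
    have p3 : 0 < q ^ (m-3) := Nat.pow_pos (by omega)
    have h01 : W 0 < W 1 := by rw [hW0, hW1]; omega
    have h12 : W 1 < W 2 := by rw [hW1, hW2]; omega
    have h23 : W 2 < W 3 := by rw [hW2, hW3]; omega
    intro r s hr hs hrs
    interval_cases r <;> interval_cases s <;> omega
  -- identification of the codeword sets
  have hset : ∀ r, r ≤ 3 → {w : Fin n → E | w ∈ Submodule.span E (Set.range fun i : Fin m =>
      fun j : Fin n => algebraMap F E (g j i)) ∧ wt w = W r} = φ '' {x | rk x = r} := by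
    intro r hr
    ext w
    simp only [Set.mem_setOf_eq, Set.mem_image, hSmem]
    constructor
    · rintro ⟨⟨x, rfl⟩, hwtw⟩
      exact ⟨x, hWinj _ _ (hrkle x) hr (by rw [← hWval x, hwtw]), rfl⟩
    · rintro ⟨x, hx, rfl⟩
      exact ⟨⟨x, rfl⟩, by rw [hWval x, hx]⟩
  -- transfer counting to triples of F-vectors
  have hcount : ∀ r, {x : Fin m → E | rk x = r}.ncard
      = {y : Fin 3 → (Fin m → F) | finrank F (span F (Set.range y)) = r}.ncard := by
    intro r
    have hcsymm : ∀ y : Fin 3 → (Fin m → F),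
        c (fun i => b.equivFun.symm (fun k => y k i)) = y := by
      intro y
      funext k i
      show b.repr (b.equivFun.symm (fun k' => y k' i)) k = y k i
      rw [← Basis.equivFun_apply, LinearEquiv.apply_symm_apply]
    set e : (Fin m → E) ≃ (Fin 3 → (Fin m → F)) :=
      { toFun := fun x => c x
        invFun := fun y i => b.equivFun.symm (fun k => y k i)
        left_inv := by
          intro x
          funext i
          show b.equivFun.symm (fun k => b.repr (x i) k) = x i
          rw [Basis.equivFun_symm_apply]
          exact b.sum_repr (x i)
        right_inv := hcsymm } with he
    have himg : {x : Fin m → E | rk x = r}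
        = e.symm '' {y | finrank F (span F (Set.range y)) = r} := by
      ext x
      simp only [Set.mem_setOf_eq, Set.mem_image]
      constructor
      · intro hx
        refine ⟨e x, ?_, e.symm_apply_apply x⟩
        show finrank F (span F (Set.range (c x))) = r
        rw [← hx]
      · rintro ⟨y, hy, rfl⟩
        show finrank F (span F (Set.range (c (e.symm y)))) = r
        have hcy : c (e.symm y) = y := hcsymm y
        rw [hcy]
        exact hy
    rw [himg, Set.ncard_image_of_injective _ (Equiv.injective _)]
  have hnum : ∀ r, r ≤ 3 → numWt (Submodule.span E (Set.range fun i : Fin m =>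
      fun j : Fin n => algebraMap F E (g j i))) (W r)
      = {y : Fin 3 → (Fin m → F) | finrank F (span F (Set.range y)) = r}.ncard := by
    intro r hr
    rw [numWt, hset r hr, Set.ncard_image_of_injective _ hinj, hcount r]
  -- arithmetic helpers
  have h1m : (1:ℕ) ≤ q ^ m := Nat.one_le_pow _ _ (by omega)
  have hqm : q ≤ q ^ m := by
    calc q = q ^ 1 := (pow_one q).symm
    _ ≤ q ^ m := Nat.pow_le_pow_right (by omega) (by omega)
  have hq2m : q ^ 2 ≤ q ^ m := Nat.pow_le_pow_right (by omega) (by omega)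
  have hq31 : (1:ℕ) ≤ q ^ 3 := Nat.one_le_pow _ _ (by omega)
  -- the four counts
  have hN0 : {y : Fin 3 → (Fin m → F) | finrank F (span F (Set.range y)) = 0}.ncard = 1 :=
    aux_count0
  have hN1 : {y : Fin 3 → (Fin m → F) | finrank F (span F (Set.range y)) = 1}.ncard
      = (q^2 + q + 1) * (q^m - 1) := by
    have h := aux_count1 (F := F) (m := m)
    have hid : (q - 1) * ((q^2 + q + 1) * (q^m - 1)) = (q^m - 1) * (q^3 - 1) := by
      zify [hq2.trans hqm, h1m, hq31, (by omega : (1:ℕ) ≤ q)]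
      ring
    exact Nat.eq_of_mul_eq_mul_left (by omega : 0 < q - 1) (by rw [h, hid])
  have hN3 : {y : Fin 3 → (Fin m → F) | finrank F (span F (Set.range y)) = 3}.ncard
      = (q^m - 1) * (q^m - q) * (q^m - q^2) := aux_count3 hm
  have hN2 : {y : Fin 3 → (Fin m → F) | finrank F (span F (Set.range y)) = 2}.ncard
      = (q^2 + q + 1) * (q^m - 1) * (q^m - q) := by
    have htot := aux_total (F := F) (m := m)
    rw [hN0, hN1, hN3] at htot
    rw [← hq] at htot
    have hid : 1 + (q^2 + q + 1) * (q^m - 1) + (q^2 + q + 1) * (q^m - 1) * (q^m - q)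
        + (q^m - 1) * (q^m - q) * (q^m - q^2) = (q^m)^3 := by
      zify [h1m, hqm, hq2m, (by omega : (1:ℕ) ≤ q)]
      ring
    omega
  refine ⟨?_, ?_, ?_, ?_, ?_⟩
  · have := hnum 0 (by omega)
    rw [hW0] at this
    rw [this, hN0]
  · have := hnum 1 (by omega)
    rw [hW1] at this
    rw [this, hN1]
  · have := hnum 2 (by omega)
    rw [hW2] at this
    rw [this, hN2]
  · have := hnum 3 (by omega)
    rw [hW3] at this
    rw [this, hN3]
  · intro i h0 h1 h2 h3
    rw [numWt]
    have hempty : {c : Fin n → E | c ∈ Submodule.span E (Set.range fun i : Fin m =>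
        fun j : Fin n => algebraMap F E (g j i)) ∧ wt c = i} = ∅ := by
      ext w
      simp only [Set.mem_setOf_eq, Set.mem_empty_iff_false, iff_false, not_and]
      intro hw hwi
      obtain ⟨x, rfl⟩ := (hSmem w).1 hw
      have hx := hWval x
      have hr := hrkle x
      rcases (by omega : rk x = 0 ∨ rk x = 1 ∨ rk x = 2 ∨ rk x = 3) with h | h | h | h
      · rw [h, hW0] at hx; exact h0 (by omega)
      · rw [h, hW1] at hx; exact h1 (by omega)
      · rw [h, hW2] at hx; exact h2 (by omega)
      · rw [h, hW3] at hx; exact h3 (by omega)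
    rw [hempty]
    exact Set.ncard_empty _
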